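/- Let K be a real Hilbert space, let α, β, μ, γ > 0, and let U be a bounded self-adjoint operator on K with ⟨Ux,x⟩ ≥ α‖x‖² for all x and ‖U‖ ≤ μ (so U is invertible and U^{-1} is self-adjoint positive). Let A be a monotone set-valued operator on K, let B : K → K be monotone and β-Lipschitz, and let x̄ ∈ K satisfy −B x̄ ∈ A x̄. Given x ∈ K, set ỹ = x − γ U(Bx), let p̃ ∈ K satisfy ỹ − p̃ ∈ γ U(A p̃), set q̃ = p̃ − γ U(B p̃) and x̃⁺ = x − ỹ + q̃. Then ‖x̃⁺ − x̄‖²_{U^{-1}} ≤ ‖x − x̄‖²_{U^{-1}} − μ^{-1}(1 − γ²β²μ²)‖x − p̃‖². -/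

import Mathlib

open Filter Topology
open scoped RealInnerProductSpace

noncomputable section

variable {E : Type*} [NormedAddCommGroup E] [InnerProductSpace ℝ E]

/-- A set-valued operator on a real Hilbert space, identified with its graph, is monotone. -/
def IsMonotoneOp (A : E → Set E) : Prop :=
  ∀ ⦃x u y v : E⦄, u ∈ A x → v ∈ A y → 0 ≤ ⟪x - y, u - v⟫

/-- The one-step Fejér estimate for Tseng's forward-backward-forward
splitting in the metric `‖·‖_{U⁻¹}`: one has
`‖x̃⁺ − x̄‖²_{U⁻¹} ≤ ‖x − x̄‖²_{U⁻¹} − μ⁻¹ (1 − γ²β²μ²) ‖x − p̃‖²`. -/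
theorem fbf_one_step_fejer_estimate
    {K : Type*} [NormedAddCommGroup K] [InnerProductSpace ℝ K]
    (α β μ γ : ℝ) (hα : 0 < α) (hβ : 0 < β) (hμ : 0 < μ) (hγ : 0 < γ)
    (U : K →L[ℝ] K)
    (hUsa : ∀ u w : K, ⟪U u, w⟫ = ⟪u, U w⟫)
    (hUcoer : ∀ u : K, α * ‖u‖ ^ 2 ≤ ⟪U u, u⟫)
    (hUnorm : ‖U‖ ≤ μ)
    -- `V = U⁻¹`
    (V : K →L[ℝ] K) (hVU : ∀ u : K, V (U u) = u) (hUV : ∀ u : K, U (V u) = u)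
    (A : K → Set K) (hA : IsMonotoneOp A)
    (B : K → K) (hBmono : ∀ u w : K, 0 ≤ ⟪u - w, B u - B w⟫)
    (hBlip : ∀ u w : K, ‖B u - B w‖ ≤ β * ‖u - w‖)
    (xbar : K) (hxbar : -B xbar ∈ A xbar)
    (x ytil ptil qtil xplus : K)
    (hy : ytil = x - γ • U (B x))
    (hp : ∃ u ∈ A ptil, ytil - ptil = γ • U u)
    (hq : qtil = ptil - γ • U (B ptil))
    (hxp : xplus = x - ytil + qtil) :
    ⟪V (xplus - xbar), xplus - xbar⟫ ≤
      ⟪V (x - xbar), x - xbar⟫ - μ⁻¹ * (1 - γ ^ 2 * β ^ 2 * μ ^ 2) * ‖x - ptil‖ ^ 2 := by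
  obtain ⟨u, hu, hyu⟩ := hp
  have hVsym : ∀ a b : K, ⟪V a, b⟫ = ⟪a, V b⟫ := by
    intro a b
    calc ⟪V a, b⟫ = ⟪V a, U (V b)⟫ := by rw [hUV]
      _ = ⟪U (V a), V b⟫ := (hUsa (V a) (V b)).symm
      _ = ⟪a, V b⟫ := by rw [hUV]
  have hVpos : ∀ z : K, μ⁻¹ * ‖z‖ ^ 2 ≤ ⟪V z, z⟫ := by
    intro z
    set v := V z with hv
    have hz : z = U v := (hUV z).symm
    have h0 : 0 ≤ ⟪U (v - μ⁻¹ • U v), v - μ⁻¹ • U v⟫ := by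
      refine le_trans ?_ (hUcoer _)
      positivity
    have hexp : ⟪U (v - μ⁻¹ • U v), v - μ⁻¹ • U v⟫
        = ⟪U v, v⟫ - 2 * μ⁻¹ * ⟪U v, U v⟫ + μ⁻¹ * μ⁻¹ * ⟪U (U v), U v⟫ := by
      simp only [map_sub, map_smul, inner_sub_left, inner_sub_right,
        real_inner_smul_left, real_inner_smul_right, smul_eq_mul]
      rw [hUsa (U v) v, real_inner_comm v (U v)]
      ring
    have hnorm : ⟪U v, U v⟫ = ‖U v‖ ^ 2 := real_inner_self_eq_norm_sq (U v)
    have h1 := real_inner_le_norm (U (U v)) (U v)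
    have h2 := U.le_opNorm (U v)
    have hUU : ⟪U (U v), U v⟫ ≤ μ * ‖U v‖ ^ 2 := by
      nlinarith [norm_nonneg (U v), norm_nonneg (U (U v)), U.opNorm_nonneg]
    have h5 : μ⁻¹ * μ⁻¹ * ⟪U (U v), U v⟫ ≤ μ⁻¹ * ‖U v‖ ^ 2 := by
      calc μ⁻¹ * μ⁻¹ * ⟪U (U v), U v⟫ ≤ μ⁻¹ * μ⁻¹ * (μ * ‖U v‖ ^ 2) :=
            mul_le_mul_of_nonneg_left hUU (by positivity)
        _ = μ⁻¹ * ‖U v‖ ^ 2 := by field_simp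
    rw [hnorm] at hexp
    have hgoal : μ⁻¹ * ‖U v‖ ^ 2 ≤ ⟪U v, v⟫ := by nlinarith [h0, hexp, h5]
    rw [hz, real_inner_comm]
    exact hgoal
  set s := ptil - xbar with hs
  set d := x - ptil with hd0
  set w := B x - B ptil with hw0
  have hxty : x - ytil = γ • U (B x) := by rw [hy]; abel
  have hdd : d = γ • U (B x) + γ • U u := by
    have : d = (x - ytil) + (ytil - ptil) := by rw [hd0]; abel
    rw [this, hxty, hyu]
  have hVd : V d = γ • (B x + u) := by
    rw [hdd, map_add, map_smul, map_smul, hVU, hVU, ← smul_add]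
  have hxplus : xplus - xbar = s + γ • U w := by
    rw [hxp, hy, hq, hw0, map_sub, smul_sub, hs]; abel
  have hmono : 0 ≤ ⟪s, u + B ptil⟫ := by
    have h1 := hA hu hxbar
    have h2 := hBmono ptil xbar
    have h3 : ⟪s, u + B ptil⟫ = ⟪ptil - xbar, u - -B xbar⟫ + ⟪ptil - xbar, B ptil - B xbar⟫ := by
      rw [hs, ← inner_add_right]
      congr 1
      abel
    linarith
  have hVsw : ⟪V s, γ • U w⟫ = γ * ⟪s, w⟫ := by
    rw [real_inner_smul_right, hVsym, hVU]
  have hL : ⟪V (xplus - xbar), xplus - xbar⟫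
      = ⟪V s, s⟫ + 2 * (γ * ⟪s, w⟫) + γ ^ 2 * ⟪w, U w⟫ := by
    rw [hxplus, map_add, inner_add_left, inner_add_right, inner_add_right, hVsw,
      map_smul, hVU, real_inner_smul_left, real_inner_smul_left,
      real_inner_smul_right, real_inner_comm w s]
    ring
  have hVds : ⟪V d, s⟫ = γ * ⟪s, B x + u⟫ := by
    rw [hVd, real_inner_smul_left, real_inner_comm (B x + u) s]
  have hVsd : ⟪V s, d⟫ = γ * ⟪s, B x + u⟫ := by
    rw [hVsym, hVd, real_inner_smul_right]
  have hE : ⟪V (x - xbar), x - xbar⟫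
      = ⟪V s, s⟫ + 2 * (γ * ⟪s, B x + u⟫) + ⟪V d, d⟫ := by
    have hxe : x - xbar = s + d := by rw [hs, hd0]; abel
    rw [hxe, map_add, inner_add_left, inner_add_right, inner_add_right, hVsd, hVds]
    ring
  have hcross : ⟪s, w⟫ - ⟪s, B x + u⟫ = -⟪s, u + B ptil⟫ := by
    rw [← inner_sub_right, ← inner_neg_right]
    congr 1
    rw [hw0]
    abel
  have hUw : ⟪w, U w⟫ ≤ μ * (β ^ 2 * ‖d‖ ^ 2) := by
    have h1 := real_inner_le_norm w (U w)
    have h2 := U.le_opNorm w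
    have h3' : ‖w‖ ≤ β * ‖d‖ := by rw [hw0, hd0]; exact hBlip x ptil
    have hw2 : ‖w‖ ^ 2 ≤ β ^ 2 * ‖d‖ ^ 2 := by
      nlinarith [mul_le_mul h3' h3' (norm_nonneg w) (by positivity : (0:ℝ) ≤ β * ‖d‖)]
    calc ⟪w, U w⟫ ≤ ‖w‖ * ‖U w‖ := h1
      _ ≤ ‖w‖ * (‖U‖ * ‖w‖) := mul_le_mul_of_nonneg_left h2 (norm_nonneg w)
      _ = ‖U‖ * ‖w‖ ^ 2 := by ring
      _ ≤ μ * ‖w‖ ^ 2 := mul_le_mul_of_nonneg_right hUnorm (sq_nonneg _)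
      _ ≤ μ * (β ^ 2 * ‖d‖ ^ 2) := mul_le_mul_of_nonneg_left hw2 hμ.le
  have hVdge := hVpos d
  have hc : γ * (⟪s, w⟫ - ⟪s, B x + u⟫) ≤ 0 := by
    rw [hcross]
    exact mul_nonpos_of_nonneg_of_nonpos hγ.le (neg_nonpos.mpr hmono)
  have hc2 : γ ^ 2 * ⟪w, U w⟫ ≤ γ ^ 2 * (μ * (β ^ 2 * ‖d‖ ^ 2)) :=
    mul_le_mul_of_nonneg_left hUw (sq_nonneg γ)
  have hcoef : μ⁻¹ * (1 - γ ^ 2 * β ^ 2 * μ ^ 2) * ‖d‖ ^ 2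
      = μ⁻¹ * ‖d‖ ^ 2 - γ ^ 2 * β ^ 2 * μ * ‖d‖ ^ 2 := by
    field_simp
  rw [hL, hE]
  linarith [hc, hc2, hVdge, hcoef]
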